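/- Two bounded linear operators A, B on a complex Hilbert space are norm-parallel (i.e., there exists a unimodular scalar λ with ‖A + λB‖ = ‖A‖ + ‖B‖) if and only if w(A*B) = ‖A‖·‖B‖, where w is the numerical radius. -/

import Mathlib

open ContinuousLinearMap

/-- The numerical radius $w(T)=\sup\{|\langle Tx,x\rangle| : \|x\|=1\}$. -/
noncomputable def numRadius {H : Type*} [NormedAddCommGroup H] [InnerProductSpace ℂ H]
    (T : H →L[ℂ] H) : ℝ :=
  ⨆ x : {x : H // ‖x‖ = 1}, ‖(inner ℂ (T x.1) x.1 : ℂ)‖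

section aux
variable {H : Type*} [NormedAddCommGroup H] [InnerProductSpace ℂ H] [CompleteSpace H]

private lemma inner_AB (A B : H →L[ℂ] H) (x : H) :
    (inner ℂ ((adjoint A * B) x) x : ℂ) = inner ℂ (B x) (A x) := by
  rw [ContinuousLinearMap.mul_apply, adjoint_inner_left]

private lemma inner_bound (A B : H →L[ℂ] H) {x : H} (hx : ‖x‖ = 1) :
    ‖(inner ℂ ((adjoint A * B) x) x : ℂ)‖ ≤ ‖A‖ * ‖B‖ := by
  rw [inner_AB]
  calc ‖(inner ℂ (B x) (A x) : ℂ)‖ ≤ ‖B x‖ * ‖A x‖ := norm_inner_le_norm _ _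
    _ ≤ (‖B‖ * ‖x‖) * (‖A‖ * ‖x‖) :=
      mul_le_mul (B.le_opNorm x) (A.le_opNorm x) (norm_nonneg _)
        (by positivity)
    _ = ‖A‖ * ‖B‖ := by rw [hx]; ring

private lemma numRadius_le_mul (A B : H →L[ℂ] H) : numRadius (adjoint A * B) ≤ ‖A‖ * ‖B‖ :=
  Real.iSup_le (fun x => inner_bound A B x.2) (by positivity)

private lemma le_numRadius (A B : H →L[ℂ] H) {x : H} (hx : ‖x‖ = 1) :
    ‖(inner ℂ (B x) (A x) : ℂ)‖ ≤ numRadius (adjoint A * B) := by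
  rw [← inner_AB]
  exact le_ciSup (f := fun x : {x : H // ‖x‖ = 1} =>
      ‖(inner ℂ ((adjoint A * B) x.1) x.1 : ℂ)‖)
    ⟨‖A‖ * ‖B‖, by rintro r ⟨y, rfl⟩; exact inner_bound A B y.2⟩ ⟨x, hx⟩

private lemma expand (A B : H →L[ℂ] H) {μ : ℂ} (hμ : ‖μ‖ = 1) (x : H) :
    ‖(A + μ • B) x‖ ^ 2 = ‖A x‖ ^ 2 + ‖B x‖ ^ 2
      + 2 * RCLike.re (μ * (inner ℂ (A x) (B x) : ℂ)) := by
  have h : (A + μ • B) x = A x + μ • B x := by simp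
  rw [h, norm_add_sq (𝕜 := ℂ), inner_smul_right, norm_smul, hμ, one_mul]
  ring

private lemma exists_unit_lt (T : H →L[ℂ] H) {r : ℝ} (hT : 0 < ‖T‖) (hr : r < ‖T‖) :
    ∃ x : H, ‖x‖ = 1 ∧ r < ‖T x‖ := by
  obtain ⟨y, hy1, hy2⟩ := T.exists_lt_apply_of_lt_opNorm (max_lt hr hT)
  have hymax : max r 0 < ‖T y‖ := hy2
  have hy0 : y ≠ 0 := by
    intro h; rw [h, map_zero, norm_zero] at hymax
    exact absurd hymax (not_lt.mpr (le_max_right r 0))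
  have hyn : (0:ℝ) < ‖y‖ := norm_pos_iff.mpr hy0
  refine ⟨(‖y‖ : ℂ)⁻¹ • y, ?_, ?_⟩
  · rw [norm_smul]; simp [hyn.ne']
  · rw [map_smul, norm_smul]
    have h1 : ‖((‖y‖ : ℂ))⁻¹‖ = ‖y‖⁻¹ := by simp
    rw [h1]
    calc r ≤ max r 0 := le_max_left _ _
      _ < ‖T y‖ := hymax
      _ ≤ ‖y‖⁻¹ * ‖T y‖ := by
        nth_rewrite 1 [← one_mul ‖T y‖]
        exact mul_le_mul_of_nonneg_right
          ((one_le_inv₀ hyn).mpr hy1.le) (norm_nonneg _)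

end aux

private lemma key_arith {a b t s r N ε δ M : ℝ} (ha : 0 < a) (hb : 0 < b)
    (hM : M = a * a + b * b + a * b) (hδpos : 0 < δ) (hδ2 : δ ≤ a * b / 2)
    (hδ1 : 2 * M * δ ≤ ε * a * b) (hxv : a * b - δ < r) (hts : r ≤ t * s)
    (hta : t ≤ a) (hsb : s ≤ b) (ht0 : 0 ≤ t) (hs0 : 0 ≤ s)
    (h2 : t ^ 2 + s ^ 2 + 2 * r ≤ N ^ 2) : (a + b) ^ 2 ≤ N ^ 2 + ε := by
  have htlb : a - δ / b ≤ t := by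
    have htb : a * b - δ ≤ t * b := by nlinarith
    have hq : (a - δ / b) * b = a * b - δ := by field_simp
    nlinarith [htb, hq]
  have hslb : b - δ / a ≤ s := by
    have hsa : a * b - δ ≤ s * a := by nlinarith
    have hq : (b - δ / a) * a = a * b - δ := by field_simp
    nlinarith [hsa, hq]
  have htlb0 : (0:ℝ) ≤ a - δ / b := by
    rw [sub_nonneg, div_le_iff₀ hb]; nlinarith
  have hslb0 : (0:ℝ) ≤ b - δ / a := by
    rw [sub_nonneg, div_le_iff₀ ha]; nlinarith
  have ht2 : (a - δ / b) ^ 2 ≤ t ^ 2 := pow_le_pow_left₀ htlb0 htlb 2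
  have hs2 : (b - δ / a) ^ 2 ≤ s ^ 2 := pow_le_pow_left₀ hslb0 hslb 2
  have hsum : 2 * a * (δ / b) + 2 * b * (δ / a) + 2 * δ ≤ ε := by
    rw [← mul_le_mul_iff_of_pos_right (mul_pos ha hb)]
    have e : (2 * a * (δ / b) + 2 * b * (δ / a) + 2 * δ) * (a * b)
        = 2 * M * δ := by
      rw [hM]; field_simp
    rw [e]
    calc 2 * M * δ ≤ ε * a * b := hδ1
      _ = ε * (a * b) := by ring
  nlinarith [sq_nonneg (δ / b), sq_nonneg (δ / a)]

theorem stmt15 {H : Type*} [NormedAddCommGroup H] [InnerProductSpace ℂ H] [CompleteSpace H]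
    (A B : H →L[ℂ] H) :
    (∃ lam : ℂ, ‖lam‖ = 1 ∧ ‖A + lam • B‖ = ‖A‖ + ‖B‖) ↔
      numRadius (adjoint A * B) = ‖A‖ * ‖B‖ := by
  set a := ‖A‖ with ha_def
  set b := ‖B‖ with hb_def
  constructor
  · rintro ⟨lam, hlam, hsum⟩
    refine le_antisymm (numRadius_le_mul A B) ?_
    refine le_of_forall_pos_le_add (fun ε hε => ?_)
    rcases le_or_gt (a + b) 0 with hS | hS
    · have ha0 : a = 0 := le_antisymm (by nlinarith [norm_nonneg A, norm_nonneg B]) (norm_nonneg A)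
      rw [ha0, zero_mul]
      have : (0:ℝ) ≤ numRadius (adjoint A * B) :=
        Real.iSup_nonneg fun x => norm_nonneg _
      linarith
    · set δ := min (ε / (a + b)) (a + b) with hδ_def
      have hδpos : 0 < δ := lt_min (div_pos hε hS) hS
      have hδle : δ ≤ a + b := min_le_right _ _
      have hδε : δ * (a + b) ≤ ε := by
        have h1 : δ ≤ ε / (a + b) := min_le_left _ _
        calc δ * (a + b) ≤ (ε / (a + b)) * (a + b) :=
              mul_le_mul_of_nonneg_right h1 hS.le
          _ = ε := div_mul_cancel₀ _ hS.ne'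
      have hTpos : 0 < ‖A + lam • B‖ := by rw [hsum]; exact hS
      have hlt : a + b - δ < ‖A + lam • B‖ := by rw [hsum]; linarith
      obtain ⟨x, hx, hx2⟩ := exists_unit_lt (A + lam • B) hTpos hlt
      have hsq : (a + b - δ) ^ 2 ≤ ‖(A + lam • B) x‖ ^ 2 := by
        apply pow_le_pow_left₀ (by linarith) hx2.le
      rw [expand A B hlam x] at hsq
      have hre : RCLike.re (lam * (inner ℂ (A x) (B x) : ℂ))
          ≤ ‖(inner ℂ (B x) (A x) : ℂ)‖ := by
        calc RCLike.re (lam * (inner ℂ (A x) (B x) : ℂ))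
            ≤ ‖lam * (inner ℂ (A x) (B x) : ℂ)‖ := RCLike.re_le_norm _
          _ = ‖(inner ℂ (A x) (B x) : ℂ)‖ := by rw [norm_mul, hlam, one_mul]
          _ = ‖(inner ℂ (B x) (A x) : ℂ)‖ := norm_inner_symm _ _
      have hAx : ‖A x‖ ≤ a := by
        calc ‖A x‖ ≤ ‖A‖ * ‖x‖ := A.le_opNorm x
          _ = a := by rw [hx, mul_one]
      have hBx : ‖B x‖ ≤ b := by
        calc ‖B x‖ ≤ ‖B‖ * ‖x‖ := B.le_opNorm x
          _ = b := by rw [hx, mul_one]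
      have hnum := le_numRadius A B hx
      nlinarith [norm_nonneg (A x), norm_nonneg (B x), sq_nonneg δ]
  · intro h
    rcases eq_or_lt_of_le (norm_nonneg A) with ha | ha
    · refine ⟨1, by simp, ?_⟩
      have hA : A = 0 := norm_eq_zero.mp ha.symm
      have ha0 : a = 0 := by rw [ha_def, ← ha]
      rw [one_smul, hA, zero_add, ha0, zero_add]
    rcases eq_or_lt_of_le (norm_nonneg B) with hb | hb
    · refine ⟨1, by simp, ?_⟩
      have hB : B = 0 := norm_eq_zero.mp hb.symm
      have hb0 : b = 0 := by rw [hb_def, ← hb]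
      rw [hB, smul_zero, add_zero, hb0, add_zero]
    -- nontrivial H, so unit vectors exist
    have hA0 : A ≠ 0 := norm_pos_iff.mp ha
    obtain ⟨v, hv⟩ : ∃ v : H, A v ≠ 0 := by
      by_contra hc
      push_neg at hc
      exact hA0 (ContinuousLinearMap.ext fun v => by simpa using hc v)
    have hv0 : v ≠ 0 := fun h0 => hv (by simp [h0])
    have hvn : (0:ℝ) < ‖v‖ := norm_pos_iff.mpr hv0
    haveI : Nonempty {x : H // ‖x‖ = 1} :=
      ⟨⟨(‖v‖ : ℂ)⁻¹ • v, by rw [norm_smul]; simp [hvn.ne']⟩⟩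
    -- maximize over the circle
    obtain ⟨lam, hlam_mem, hmax⟩ :=
      (isCompact_sphere (0:ℂ) 1).exists_isMaxOn
        ⟨1, by simp⟩
        (((continuous_const.add (continuous_id.smul continuous_const)).norm).continuousOn :
          ContinuousOn (fun μ : ℂ => ‖A + μ • B‖) (Metric.sphere 0 1))
    have hlam : ‖lam‖ = 1 := by simpa using hlam_mem
    refine ⟨lam, hlam, le_antisymm ?_ ?_⟩
    · calc ‖A + lam • B‖ ≤ ‖A‖ + ‖lam • B‖ := norm_add_le _ _
        _ = a + b := by rw [norm_smul, hlam, one_mul]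
    · -- a + b ≤ ‖A + lam • B‖, via squares
      have hsq : (a + b) ^ 2 ≤ ‖A + lam • B‖ ^ 2 := by
        refine le_of_forall_pos_le_add (fun ε hε => ?_)
        set M := a * a + b * b + a * b with hM_def
        clear_value M
        have hMpos : 0 < M := by nlinarith [hM_def, mul_pos ha hb, mul_pos ha ha, mul_pos hb hb]
        obtain ⟨δ, hδ_def⟩ : ∃ δ : ℝ, δ = min (ε * a * b / (2 * M)) (a * b / 2) := ⟨_, rfl⟩
        have hδpos : 0 < δ := by
          rw [hδ_def]
          exact lt_min (by positivity) (by positivity)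
        have hδ2 : δ ≤ a * b / 2 := hδ_def ▸ min_le_right _ _
        have hδ1 : 2 * M * δ ≤ ε * a * b := by
          have h1 : δ ≤ ε * a * b / (2 * M) := hδ_def ▸ min_le_left _ _
          calc 2 * M * δ ≤ 2 * M * (ε * a * b / (2 * M)) :=
                mul_le_mul_of_nonneg_left h1 (by positivity)
            _ = ε * a * b := by field_simp
        have hlt : a * b - δ < numRadius (adjoint A * B) := by rw [h]; linarith
        obtain ⟨⟨x, hx⟩, hxv⟩ := exists_lt_of_lt_ciSup hlt
        rw [inner_AB] at hxv
        set c : ℂ := inner ℂ (A x) (B x) with hc_def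
        have hcnorm : ‖(inner ℂ (B x) (A x) : ℂ)‖ = ‖c‖ := norm_inner_symm _ _
        rw [hcnorm] at hxv
        have hcpos : 0 < ‖c‖ := by nlinarith
        have hc0 : c ≠ 0 := norm_pos_iff.mp hcpos
        set μ : ℂ := (starRingEnd ℂ) c / ‖c‖ with hμ_def
        have hμ : ‖μ‖ = 1 := by
          rw [hμ_def, norm_div, RCLike.norm_conj, Complex.norm_real,
            Real.norm_of_nonneg (norm_nonneg c), div_self hcpos.ne']
        have hμc : μ * c = (‖c‖ : ℂ) := by
          rw [hμ_def, div_mul_eq_mul_div, Complex.conj_mul']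
          rw [div_eq_iff (by simpa using hcpos.ne')]
          ring
        have hmem : μ ∈ Metric.sphere (0:ℂ) 1 := by simpa using hμ
        have h1 : ‖(A + μ • B) x‖ ≤ ‖A + lam • B‖ := by
          calc ‖(A + μ • B) x‖ ≤ ‖A + μ • B‖ * ‖x‖ := le_opNorm _ _
            _ = ‖A + μ • B‖ := by rw [hx, mul_one]
            _ ≤ ‖A + lam • B‖ := hmax hmem
        have h2 : ‖(A + μ • B) x‖ ^ 2 ≤ ‖A + lam • B‖ ^ 2 :=
          pow_le_pow_left₀ (norm_nonneg _) h1 2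
        rw [expand A B hμ x] at h2
        rw [← hc_def, hμc] at h2
        have hre : RCLike.re ((‖c‖ : ℂ)) = ‖c‖ := by simp
        rw [hre] at h2
        set t := ‖A x‖ with ht_def
        set s := ‖B x‖ with hs_def
        have hts : ‖c‖ ≤ t * s := norm_inner_le_norm _ _
        have hta : t ≤ a := by
          calc t ≤ ‖A‖ * ‖x‖ := A.le_opNorm x
            _ = a := by rw [hx, mul_one]
        have hsb : s ≤ b := by
          calc s ≤ ‖B‖ * ‖x‖ := B.le_opNorm x
            _ = b := by rw [hx, mul_one]
        have ht0 : (0:ℝ) ≤ t := norm_nonneg _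
        have hs0 : (0:ℝ) ≤ s := norm_nonneg _
        clear h1 hμc hμ hmem hlt hmax hcnorm hc_def hc0
        clear_value t s
        clear_value μ
        clear hμ_def μ hre
        clear_value c
        exact key_arith ha hb hM_def hδpos hδ2 hδ1 hxv hts hta hsb ht0 hs0 h2
      have := Real.sqrt_le_sqrt hsq
      rwa [Real.sqrt_sq (by positivity), Real.sqrt_sq (norm_nonneg _)] at this
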